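/- Let $1 < p < \infty$, let $u \in A_1$, and let $v$ be a positive function with $v, v u \in L^1_{loc}(\mathbb{R}^n)$ such that $v \in A_p^{\mathcal{R}}(u)$. Then $uv \in A_p^{\mathcal{R}}$ and $[uv]_{A_p^{\mathcal{R}}} \le [u]_{A_1} [v]_{A_p^{\mathcal{R}}(u)}$. -/
import Mathlib


open MeasureTheory
open scoped ENNReal

/-- The open axis-parallel cube with lower corner `c` and side length `l` in `ℝⁿ`. -/
def cube (n : ℕ) (c : Fin n → ℝ) (l : ℝ) : Set (Fin n → ℝ) :=
  Set.univ.pi fun i => Set.Ioo (c i) (c i + l)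

/-- The Muckenhoupt `A₁` constant of a weight `w` on `ℝⁿ`. -/
noncomputable def A1Const (n : ℕ) (w : (Fin n → ℝ) → ℝ) : ℝ≥0∞ :=
  ⨆ (c : Fin n → ℝ) (l : ℝ) (_ : 0 < l),
    (∫⁻ x in cube n c l, ENNReal.ofReal (w x)) / volume (cube n c l) *
      (essInf (fun x => ENNReal.ofReal (w x)) (volume.restrict (cube n c l)))⁻¹

/-- The weak `L^{p,∞}(μ)` quasi-norm. -/
noncomputable def wkNormMu {X : Type*} [MeasurableSpace X] (μ : Measure X) (p : ℝ)
    (g : X → ℝ) : ℝ≥0∞ :=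
  ⨆ (t : ℝ) (_ : 0 < t), ENNReal.ofReal t * μ {x | t < |g x|} ^ (1 / p)

/-- The restricted weak-type constant `[v]_{A_p^𝓡(μ)}` relative to a base measure `μ`:
`sup_Q ((v dμ)(Q))^{1/p} ‖χ_Q v⁻¹‖_{L^{p',∞}(v dμ)} / μ(Q)`.
Taking `μ` the Lebesgue measure recovers `[v]_{A_p^𝓡}`. -/
noncomputable def ApRConst (n : ℕ) (μ : Measure (Fin n → ℝ)) (p : ℝ)
    (v : (Fin n → ℝ) → ℝ) : ℝ≥0∞ :=
  ⨆ (c : Fin n → ℝ) (l : ℝ) (_ : 0 < l),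
    (μ.withDensity fun x => ENNReal.ofReal (v x)) (cube n c l) ^ (1 / p) *
      wkNormMu (μ.withDensity fun x => ENNReal.ofReal (v x)) (p / (p - 1))
        ((cube n c l).indicator fun x => (v x)⁻¹) / μ (cube n c l)

lemma measurableSet_cube (n : ℕ) (c : Fin n → ℝ) (l : ℝ) : MeasurableSet (cube n c l) :=
  MeasurableSet.univ_pi fun _ => measurableSet_Ioo

lemma volume_cube (n : ℕ) (c : Fin n → ℝ) (l : ℝ) :
    volume (cube n c l) = ENNReal.ofReal l ^ n := by
  rw [cube, volume_pi_pi]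
  simp [Real.volume_Ioo]

lemma volume_cube_ne_zero (n : ℕ) (c : Fin n → ℝ) {l : ℝ} (hl : 0 < l) :
    volume (cube n c l) ≠ 0 := by
  rw [volume_cube]
  exact pow_ne_zero _ (by simp [hl])

lemma volume_cube_ne_top (n : ℕ) (c : Fin n → ℝ) (l : ℝ) :
    volume (cube n c l) ≠ ⊤ := by
  rw [volume_cube]
  exact ENNReal.pow_ne_top ENNReal.ofReal_ne_top

lemma cube_subset_Icc (n : ℕ) (c : Fin n → ℝ) (l : ℝ) :
    cube n c l ⊆ Set.Icc c (fun i => c i + l) := by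
  rw [← Set.pi_univ_Icc]
  exact Set.pi_mono fun i _ => Set.Ioo_subset_Icc_self

/-- A locally integrable function has finite `lintegral` on cubes. -/
lemma lintegral_cube_lt_top {n : ℕ} {w : (Fin n → ℝ) → ℝ}
    (hw : LocallyIntegrable w volume) (c : Fin n → ℝ) (l : ℝ) :
    (∫⁻ x in cube n c l, ENNReal.ofReal (w x)) < ⊤ := by
  have h1 : IntegrableOn w (Set.Icc c (fun i => c i + l)) volume :=
    hw.integrableOn_isCompact isCompact_Icc
  have h2 : IntegrableOn w (cube n c l) volume :=
    h1.mono_set (cube_subset_Icc n c l)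
  exact h2.setLIntegral_lt_top

lemma lintegral_cube_ne_zero {n : ℕ} {w : (Fin n → ℝ) → ℝ}
    (hwm : Measurable w) (hwp : ∀ x, 0 < w x) (c : Fin n → ℝ) {l : ℝ} (hl : 0 < l) :
    (∫⁻ x in cube n c l, ENNReal.ofReal (w x)) ≠ 0 := by
  intro h
  rw [lintegral_eq_zero_iff hwm.ennreal_ofReal] at h
  have : ∀ᵐ x ∂(volume.restrict (cube n c l)), False := by
    filter_upwards [h] with x hx
    simp only [Pi.zero_apply, ENNReal.ofReal_eq_zero] at hx
    exact absurd hx (not_le.mpr (hwp x))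
  have h0 : volume.restrict (cube n c l) Set.univ = 0 := by
    simpa [ae_iff] using this
  rw [Measure.restrict_apply_univ] at h0
  exact volume_cube_ne_zero n c hl h0

/-- for `1 < p < ∞`, `u ∈ A₁` and `v ∈ A_p^𝓡(u)` (with `v, vu` locally
integrable), one has `uv ∈ A_p^𝓡` with `[uv]_{A_p^𝓡} ≤ [u]_{A₁} [v]_{A_p^𝓡(u)}`. -/
theorem stmt8 (n : ℕ) (p : ℝ) (hp : 1 < p)
    (u v : (Fin n → ℝ) → ℝ) (hum : Measurable u) (hvm : Measurable v)
    (hup : ∀ x, 0 < u x) (hvp : ∀ x, 0 < v x)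
    (huloc : LocallyIntegrable u volume)
    (hvloc : LocallyIntegrable v volume)
    (hvuloc : LocallyIntegrable (fun x => v x * u x) volume)
    (huA1 : A1Const n u < ⊤)
    (hvR : ApRConst n (volume.withDensity fun x => ENNReal.ofReal (u x)) p v < ⊤) :
    ApRConst n volume p (fun x => u x * v x) ≤
      A1Const n u *
        ApRConst n (volume.withDensity fun x => ENNReal.ofReal (u x)) p v := by
  set μu := volume.withDensity fun x => ENNReal.ofReal (u x) with hμu
  rw [ApRConst]
  refine iSup_le fun c => iSup_le fun l => iSup_le fun hl => ?_
  set Q := cube n c l with hQ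
  have hQm : MeasurableSet Q := measurableSet_cube n c l
  have hmeas : (volume.withDensity fun x => ENNReal.ofReal (u x * v x))
      = μu.withDensity fun x => ENNReal.ofReal (v x) := by
    rw [hμu, ← withDensity_mul _ hum.ennreal_ofReal hvm.ennreal_ofReal]
    congr 1
    funext x
    simp [ENNReal.ofReal_mul (hup x).le]
  set ν := μu.withDensity fun x => ENNReal.ofReal (v x) with hν
  set e := essInf (fun x => ENNReal.ofReal (u x)) (volume.restrict Q) with he
  set uQ := ∫⁻ x in Q, ENNReal.ofReal (u x) with huQdef
  have huQ0 : uQ ≠ 0 := lintegral_cube_ne_zero hum hup c hl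
  have huQt : uQ ≠ ⊤ := (lintegral_cube_lt_top huloc c l).ne
  have hvolQ0 : volume Q ≠ 0 := volume_cube_ne_zero n c hl
  have hvolQt : volume Q ≠ ⊤ := volume_cube_ne_top n c l
  have hμuQ : μu Q = uQ := by rw [hμu, withDensity_apply _ hQm]
  -- the `A₁` term for this cube
  have hA1term : uQ / volume Q * e⁻¹ ≤ A1Const n u := by
    rw [A1Const]
    exact le_iSup_of_le c (le_iSup_of_le l (le_iSup_of_le hl le_rfl))
  have he0 : e ≠ 0 := by
    intro h0
    rw [h0, ENNReal.inv_zero] at hA1term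
    have hne : uQ / volume Q ≠ 0 := by
      simp [ENNReal.div_eq_zero_iff, huQ0, hvolQt]
    rw [ENNReal.mul_top hne] at hA1term
    exact huA1.ne (top_le_iff.mp hA1term)
  have het : e ≠ ⊤ := by
    intro ht
    have hae : ∀ᵐ x ∂(volume.restrict Q), e ≤ ENNReal.ofReal (u x) := ae_essInf_le
    rw [ht] at hae
    have hfalse : ∀ᵐ x ∂(volume.restrict Q), False := by
      filter_upwards [hae] with x hx
      exact ENNReal.ofReal_ne_top (top_le_iff.mp hx)
    have h0 : volume.restrict Q Set.univ = 0 := by simpa [ae_iff] using hfalse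
    rw [Measure.restrict_apply_univ] at h0
    exact hvolQ0 h0
  set r := e.toReal with hr
  have hrpos : 0 < r := ENNReal.toReal_pos he0 het
  have her : ENNReal.ofReal r = e := ENNReal.ofReal_toReal het
  -- a.e. lower bound for `u` on `Q`
  have haeQ : ∀ᵐ x ∂volume, x ∈ Q → r ≤ u x := by
    have hae : ∀ᵐ x ∂(volume.restrict Q), e ≤ ENNReal.ofReal (u x) := ae_essInf_le
    rw [ae_restrict_iff' hQm] at hae
    filter_upwards [hae] with x hx hxQ
    have h2 := hx hxQ
    rw [← her] at h2
    exact (ENNReal.ofReal_le_ofReal_iff (hup x).le).mp h2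
  have hνac : ν ≪ volume := by
    rw [hν, hμu]
    exact (withDensity_absolutelyContinuous _ _).trans
      (withDensity_absolutelyContinuous _ _)
  -- weak-norm comparison
  have hW : wkNormMu ν (p / (p - 1)) (Q.indicator fun x => (u x * v x)⁻¹)
      ≤ e⁻¹ * wkNormMu ν (p / (p - 1)) (Q.indicator fun x => (v x)⁻¹) := by
    rw [wkNormMu]
    refine iSup_le fun t => iSup_le fun ht => ?_
    have hsub : ν {x | t < |Q.indicator (fun x => (u x * v x)⁻¹) x|}
        ≤ ν {x | r * t < |Q.indicator (fun x => (v x)⁻¹) x|} := by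
      refine measure_mono_ae ?_
      filter_upwards [hνac.ae_le haeQ] with x hx hmem
      replace hmem : t < |Q.indicator (fun x => (u x * v x)⁻¹) x| := hmem
      show r * t < |Q.indicator (fun x => (v x)⁻¹) x|
      by_cases hxQ : x ∈ Q
      · have hru := hx hxQ
        rw [Set.indicator_of_mem hxQ] at hmem
        rw [Set.indicator_of_mem hxQ]
        have huvpos : 0 < (u x * v x)⁻¹ := inv_pos.mpr (mul_pos (hup x) (hvp x))
        rw [abs_of_pos huvpos] at hmem
        rw [abs_of_pos (inv_pos.mpr (hvp x))]
        have h1 : r * t < r * (u x * v x)⁻¹ := mul_lt_mul_of_pos_left hmem hrpos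
        have h2 : r * (u x * v x)⁻¹ ≤ (v x)⁻¹ := by
          rw [mul_inv, ← mul_assoc]
          have h3 : r * (u x)⁻¹ ≤ 1 := by
            rw [← div_eq_mul_inv, div_le_one (hup x)]
            exact hru
          exact mul_le_of_le_one_left (inv_pos.mpr (hvp x)).le h3
        exact h1.trans_le h2
      · rw [Set.indicator_of_notMem hxQ] at hmem
        simp at hmem
        linarith
    have hexp : (0:ℝ) ≤ 1 / (p / (p - 1)) :=
      le_of_lt (one_div_pos.mpr (div_pos (by linarith) (by linarith)))
    calc ENNReal.ofReal t
          * ν {x | t < |Q.indicator (fun x => (u x * v x)⁻¹) x|} ^ (1 / (p / (p - 1)))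
        ≤ ENNReal.ofReal t
          * ν {x | r * t < |Q.indicator (fun x => (v x)⁻¹) x|} ^ (1 / (p / (p - 1))) :=
          mul_le_mul_right (ENNReal.rpow_le_rpow hsub hexp) _
      _ = e⁻¹ * (ENNReal.ofReal (r * t)
          * ν {x | r * t < |Q.indicator (fun x => (v x)⁻¹) x|} ^ (1 / (p / (p - 1)))) := by
          rw [← mul_assoc, ENNReal.ofReal_mul hrpos.le, ← mul_assoc, ← her,
            ENNReal.inv_mul_cancel (by simpa [her] using he0) ENNReal.ofReal_ne_top, one_mul]
      _ ≤ e⁻¹ * wkNormMu ν (p / (p - 1)) (Q.indicator fun x => (v x)⁻¹) := by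
          refine mul_le_mul_right ?_ _
          rw [wkNormMu]
          exact le_iSup_of_le (r * t) (le_iSup_of_le (mul_pos hrpos ht) le_rfl)
  -- the `A_p^𝓡(u)` term for this cube
  have hterm : ν Q ^ (1 / p) * wkNormMu ν (p / (p - 1)) (Q.indicator fun x => (v x)⁻¹) / uQ
      ≤ ApRConst n μu p v := by
    rw [ApRConst]
    refine le_iSup_of_le c (le_iSup_of_le l (le_iSup_of_le hl ?_))
    rw [← hQ, ← hν, hμuQ]
  have hcancel : uQ * uQ⁻¹ = 1 := ENNReal.mul_inv_cancel huQ0 huQt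
  rw [hmeas]
  calc ν Q ^ (1 / p)
        * wkNormMu ν (p / (p - 1)) (Q.indicator fun x => (u x * v x)⁻¹) / volume Q
      ≤ ν Q ^ (1 / p)
        * (e⁻¹ * wkNormMu ν (p / (p - 1)) (Q.indicator fun x => (v x)⁻¹)) / volume Q :=
        ENNReal.div_le_div_right (mul_le_mul_right hW _) _
    _ = (uQ / volume Q * e⁻¹)
        * (ν Q ^ (1 / p) * wkNormMu ν (p / (p - 1)) (Q.indicator fun x => (v x)⁻¹) / uQ) := by
        rw [div_eq_mul_inv, div_eq_mul_inv, div_eq_mul_inv]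
        calc ν Q ^ (1 / p)
              * (e⁻¹ * wkNormMu ν (p / (p - 1)) (Q.indicator fun x => (v x)⁻¹))
              * (volume Q)⁻¹
            = (uQ * uQ⁻¹) * (ν Q ^ (1 / p)
              * (e⁻¹ * wkNormMu ν (p / (p - 1)) (Q.indicator fun x => (v x)⁻¹))
              * (volume Q)⁻¹) := by rw [hcancel, one_mul]
          _ = uQ * (volume Q)⁻¹ * e⁻¹
              * (ν Q ^ (1 / p) * wkNormMu ν (p / (p - 1)) (Q.indicator fun x => (v x)⁻¹)
                * uQ⁻¹) := by ring
    _ ≤ A1Const n u * ApRConst n μu p v := mul_le_mul' hA1term hterm
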